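/- Let $u \in S_n$ be decreasing on $\{1,\dots,k\}$ and on $\{k+1,\dots,n\}$, and suppose $u \le w$ in strong Bruhat order. Then $u(a) \le w(a)$ for all $a \le k$, and $u(a) \ge w(a)$ for all $a > k$. -/

import Mathlib

/-- Coxeter length of a permutation of `Fin n`: the number of inversions. -/
def len {n : ℕ} (u : Equiv.Perm (Fin n)) : ℕ :=
  (Finset.univ.filter fun p : Fin n × Fin n => p.1 < p.2 ∧ u p.2 < u p.1).card

/-- `w` covers `u` in the strong Bruhat order: `w = u·t` for a transposition `t`
and `ℓ(w) = ℓ(u) + 1`. -/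
def BruhatCover {n : ℕ} (u w : Equiv.Perm (Fin n)) : Prop :=
  (∃ i j : Fin n, i ≠ j ∧ w = u * Equiv.swap i j) ∧ len w = len u + 1

/-- The strong Bruhat order on `S_n`. -/
def BruhatLE {n : ℕ} (u w : Equiv.Perm (Fin n)) : Prop :=
  Relation.ReflTransGen BruhatCover u w

/-- The image `u({1,…,k})`, zero-indexed as `u({i : i.val < k})`. -/
def kImage {n : ℕ} (k : ℕ) (u : Equiv.Perm (Fin n)) : Finset (Fin n) :=
  (Finset.univ.filter fun i : Fin n => i.val < k).image u

/-- `w` is a `k`-cover of `u`: a Bruhat cover with `w({1,…,k}) ≠ u({1,…,k})`. -/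
def KBruhatCover {n : ℕ} (k : ℕ) (u w : Equiv.Perm (Fin n)) : Prop :=
  BruhatCover u w ∧ kImage k u ≠ kImage k w

/-- The `k`-Bruhat order on `S_n`: transitive closure of `k`-covers. -/
def KBruhatLE {n : ℕ} (k : ℕ) (u w : Equiv.Perm (Fin n)) : Prop :=
  Relation.ReflTransGen (KBruhatCover k) u w

/-- `z` lies in the Young subgroup `S_k × S_{n-k}`, i.e. `z` fixes the sets
`{1,…,k}` and `{k+1,…,n}` setwise. -/
def IsYoung {n : ℕ} (k : ℕ) (z : Equiv.Perm (Fin n)) : Prop :=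
  ∀ i : Fin n, (z i).val < k ↔ i.val < k

/-- `u` is anti-Grassmannian of type `(k,n)`: decreasing on `{1,…,k}` and on
`{k+1,…,n}` (zero-indexed: on `val < k` and on `k ≤ val`). -/
def AntiGrass {n : ℕ} (k : ℕ) (u : Equiv.Perm (Fin n)) : Prop :=
  (∀ a b : Fin n, a < b → b.val < k → u b < u a) ∧
  (∀ a b : Fin n, a < b → k ≤ a.val → u b < u a)

/-- If `u` is decreasing on `{1,…,k}` and on `{k+1,…,n}` and `u ≤ w` in strong
Bruhat order, then `u(a) ≤ w(a)` for `a ≤ k` and `u(a) ≥ w(a)` for `a > k`. -/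

private lemma swap_rev_aux {n : ℕ} (u : Equiv.Perm (Fin n)) {i j p q : Fin n}
    (hij : i < j) (hu : u j < u i) (hpq : p < q)
    (hrev : Equiv.swap i j q < Equiv.swap i j p)
    (hinv : u (Equiv.swap i j q) < u (Equiv.swap i j p)) : u q < u p := by
  by_cases hpi : p = i
  · by_cases hqj : q = j
    · rw [hpi, hqj, Equiv.swap_apply_left, Equiv.swap_apply_right] at hinv
      exact absurd hinv (not_lt.2 hu.le)
    · have hqi : q ≠ i := by rw [← hpi]; exact hpq.ne'
      rw [hpi, Equiv.swap_apply_left, Equiv.swap_apply_of_ne_of_ne hqi hqj] at hinv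
      rw [hpi]
      exact hinv.trans hu
  · by_cases hqj : q = j
    · have hpj : p ≠ j := by rw [← hqj]; exact hpq.ne
      rw [hqj, Equiv.swap_apply_right, Equiv.swap_apply_of_ne_of_ne hpi hpj] at hinv
      rw [hqj]
      exact hu.trans hinv
    · by_cases hpj : p = j
      · have hip : i < p := by rw [hpj]; exact hij
        have hqi : q ≠ i := fun h => absurd (h ▸ hpq) (not_lt.2 hip.le)
        rw [hpj, Equiv.swap_apply_right, Equiv.swap_apply_of_ne_of_ne hqi hqj] at hrev
        exact absurd hrev (not_lt.2 (hip.trans hpq).le)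
      · by_cases hqi : q = i
        · have hqj' : q < j := by rw [hqi]; exact hij
          rw [hqi, Equiv.swap_apply_left, Equiv.swap_apply_of_ne_of_ne hpi hpj] at hrev
          exact absurd hrev (not_lt.2 (hpq.trans hqj').le)
        · rw [Equiv.swap_apply_of_ne_of_ne hpi hpj,
            Equiv.swap_apply_of_ne_of_ne hqi hqj] at hrev
          exact absurd hpq (not_lt.2 hrev.le)

private lemma len_swap_le {n : ℕ} (u : Equiv.Perm (Fin n)) {i j : Fin n}
    (hij : i < j) (hu : u j < u i) : len (u * Equiv.swap i j) ≤ len u := by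
  classical
  unfold len
  apply Finset.card_le_card_of_injOn
    (fun p : Fin n × Fin n => if Equiv.swap i j p.1 < Equiv.swap i j p.2
      then (Equiv.swap i j p.1, Equiv.swap i j p.2) else p)
  · rintro ⟨p, q⟩ hpq
    replace hpq := Finset.mem_filter.mp hpq
    simp only [Finset.mem_coe, Finset.mem_filter, Finset.mem_univ, true_and, Equiv.Perm.mul_apply] at hpq ⊢
    obtain ⟨h1, h2⟩ := hpq
    split_ifs with hb
    · exact ⟨hb, h2⟩
    · have hne : Equiv.swap i j p ≠ Equiv.swap i j q :=
        fun h => h1.ne ((Equiv.swap i j).injective h)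
      have hrev : Equiv.swap i j q < Equiv.swap i j p := (hne.lt_or_gt).resolve_left hb
      exact ⟨h1, swap_rev_aux u hij hu h1 hrev h2⟩
  · rintro ⟨p, q⟩ hp ⟨p', q'⟩ hq heq
    simp only [Finset.mem_coe, Finset.mem_filter, Finset.mem_univ, true_and] at hp hq
    beta_reduce at heq
    split_ifs at heq with h1 h2 h2
    · obtain ⟨e1, e2⟩ := Prod.mk.injEq .. ▸ heq
      exact Prod.ext ((Equiv.swap i j).injective e1) ((Equiv.swap i j).injective e2)
    · exfalso
      obtain ⟨e1, e2⟩ := Prod.mk.injEq .. ▸ heq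
      apply h2
      rw [← e1, ← e2, Equiv.swap_apply_self, Equiv.swap_apply_self]
      exact hp.1
    · exfalso
      obtain ⟨e1, e2⟩ := Prod.mk.injEq .. ▸ heq.symm
      apply h1
      rw [← e1, ← e2, Equiv.swap_apply_self, Equiv.swap_apply_self]
      exact hq.1
    · exact heq

private lemma cover_orient {n : ℕ} {u w : Equiv.Perm (Fin n)} (h : BruhatCover u w) :
    ∃ i j : Fin n, i < j ∧ u i < u j ∧ w = u * Equiv.swap i j := by
  obtain ⟨⟨i, j, hne, hw⟩, hlen⟩ := h
  rcases hne.lt_or_gt with hij | hij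
  · refine ⟨i, j, hij, ?_, hw⟩
    rcases lt_trichotomy (u i) (u j) with h' | h' | h'
    · exact h'
    · exact absurd (u.injective h') hne
    · have : len w ≤ len u := by rw [hw]; exact len_swap_le u hij h'
      omega
  · rw [Equiv.swap_comm] at hw
    refine ⟨j, i, hij, ?_, hw⟩
    rcases lt_trichotomy (u j) (u i) with h' | h' | h'
    · exact h'
    · exact absurd (u.injective h') hne.symm
    · have : len w ≤ len u := by rw [hw]; exact len_swap_le u hij h'
      omega

/-- number of positions `p` before `a` with value `u p ≥ t`. -/
def cnt {n : ℕ} (u : Equiv.Perm (Fin n)) (a : ℕ) (t : Fin n) : ℕ :=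
  (Finset.univ.filter fun p : Fin n => t ≤ u p ∧ p.val < a).card

lemma cnt_le_of_cover {n : ℕ} {u w : Equiv.Perm (Fin n)} (h : BruhatCover u w)
    (a : ℕ) (t : Fin n) : cnt u a t ≤ cnt w a t := by
  classical
  obtain ⟨i, j, hij, hu, rfl⟩ := cover_orient h
  unfold cnt
  apply Finset.card_le_card_of_injOn (fun p : Fin n => if p = j ∧ ¬ t ≤ u i then i else p)
  · intro p hp
    refine Finset.mem_filter.mpr ?_
    simp only [Finset.mem_coe, Finset.mem_filter, Finset.mem_univ, true_and, Equiv.Perm.mul_apply] at hp ⊢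
    obtain ⟨h2, h1⟩ := hp
    split_ifs with hb
    · obtain ⟨rfl, hti⟩ := hb
      refine ⟨?_, lt_trans (Fin.lt_def.mp hij) h1⟩
      rw [Equiv.swap_apply_left]
      exact h2
    · refine ⟨?_, h1⟩
      by_cases hpi : p = i
      · rw [hpi, Equiv.swap_apply_left]
        exact le_trans (hpi ▸ h2) hu.le
      · by_cases hpj : p = j
        · rw [hpj, Equiv.swap_apply_right]
          exact not_not.mp fun hc => hb ⟨hpj, hc⟩
        · rw [Equiv.swap_apply_of_ne_of_ne hpi hpj]
          exact h2
  · intro p hp q hq heq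
    simp only [Finset.mem_coe, Finset.mem_filter, Finset.mem_univ, true_and] at hp hq
    beta_reduce at heq
    split_ifs at heq with h1 h2 h2
    · rw [h1.1, h2.1]
    · exact absurd (heq ▸ hq.1) h1.2
    · exact absurd (heq ▸ hp.1) h2.2
    · exact heq

lemma cnt_le_of_le {n : ℕ} {u w : Equiv.Perm (Fin n)} (h : BruhatLE u w)
    (a : ℕ) (t : Fin n) : cnt u a t ≤ cnt w a t := by
  induction h with
  | refl => exact le_refl _
  | tail _ hc ih => exact ih.trans (cnt_le_of_cover hc a t)

lemma total_count {n : ℕ} (u : Equiv.Perm (Fin n)) (t : Fin n) :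
    (Finset.univ.filter fun p : Fin n => t ≤ u p).card
      = (Finset.univ.filter fun p : Fin n => t ≤ p).card := by
  classical
  apply Finset.card_bij (fun p _ => u p)
  · intro p hp
    simp only [Finset.mem_filter, Finset.mem_univ, true_and] at hp ⊢
    exact hp
  · intro p _ q _ h
    exact u.injective h
  · intro q hq
    refine ⟨u.symm q, ?_, by simp⟩
    simp only [Finset.mem_filter, Finset.mem_univ, true_and] at hq ⊢
    simpa using hq

lemma cnt_split {n : ℕ} (u : Equiv.Perm (Fin n)) (a : ℕ) (t : Fin n) :
    cnt u a t + (Finset.univ.filter fun p : Fin n => t ≤ u p ∧ ¬ p.val < a).card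
      = (Finset.univ.filter fun p : Fin n => t ≤ u p).card := by
  classical
  have := Finset.card_filter_add_card_filter_not
    (s := Finset.univ.filter fun p : Fin n => t ≤ u p) (p := fun p : Fin n => p.val < a)
  rw [Finset.filter_filter, Finset.filter_filter] at this
  exact this

theorem antiGrass_bruhat_le_values {n k : ℕ} (hk : k ≤ n) (u w : Equiv.Perm (Fin n))
    (hAG : AntiGrass k u) (h : BruhatLE u w) :
    (∀ a : Fin n, a.val < k → u a ≤ w a) ∧ (∀ a : Fin n, k ≤ a.val → w a ≤ u a) := by
  classical
  constructor
  · intro a ha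
    have hcnt := cnt_le_of_le h (a.val + 1) (u a)
    unfold cnt at hcnt
    have hSu : (Finset.univ.filter fun p : Fin n => u a ≤ u p ∧ p.val < a.val + 1)
        = Finset.Iic a := by
      ext p
      simp only [Finset.mem_filter, Finset.mem_univ, true_and, Finset.mem_Iic,
        Fin.le_def, Nat.lt_succ_iff]
      constructor
      · exact fun hp => hp.2
      · intro hp
        refine ⟨?_, hp⟩
        rcases eq_or_lt_of_le hp with heq | hlt
        · have : p = a := Fin.ext heq
          rw [this]
        · exact (hAG.1 p a (Fin.lt_def.mpr hlt) ha).le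
    have hSw_sub : (Finset.univ.filter fun p : Fin n => u a ≤ w p ∧ p.val < a.val + 1)
        ⊆ Finset.Iic a := by
      intro p hp
      simp only [Finset.mem_filter, Finset.mem_univ, true_and] at hp
      simp only [Finset.mem_Iic, Fin.le_def]
      exact Nat.lt_succ_iff.mp hp.2
    have hSw : (Finset.univ.filter fun p : Fin n => u a ≤ w p ∧ p.val < a.val + 1)
        = Finset.Iic a := by
      refine Finset.eq_of_subset_of_card_le hSw_sub ?_
      rw [← hSu]
      exact hcnt
    have : a ∈ (Finset.univ.filter fun p : Fin n => u a ≤ w p ∧ p.val < a.val + 1) := by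
      rw [hSw]
      exact Finset.mem_Iic.mpr le_rfl
    simp only [Finset.mem_filter] at this
    exact this.2.1
  · intro a ha
    by_contra hcon
    push_neg at hcon
    set t := w a with ht
    have hpre := cnt_le_of_le h a.val t
    have htotal : (Finset.univ.filter fun p : Fin n => t ≤ u p).card
        = (Finset.univ.filter fun p : Fin n => t ≤ w p).card := by
      rw [total_count u t, total_count w t]
    have hsu := cnt_split u a.val t
    have hsw := cnt_split w a.val t
    have hEmpty : (Finset.univ.filter fun p : Fin n => t ≤ u p ∧ ¬ p.val < a.val) = ∅ := by
      rw [Finset.filter_eq_empty_iff]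
      intro p _
      rintro ⟨h1, h2⟩
      rcases eq_or_ne p a with rfl | hpa
      · exact absurd h1 (not_le.mpr hcon)
      · have hap : a < p := Fin.lt_def.mpr
          (lt_of_le_of_ne (not_lt.mp h2) fun hh => hpa (Fin.ext hh.symm))
        have := hAG.2 a p hap ha
        exact absurd h1 (not_le.mpr (lt_trans this hcon))
    have hMem : a ∈ (Finset.univ.filter fun p : Fin n => t ≤ w p ∧ ¬ p.val < a.val) := by
      simp only [Finset.mem_filter, Finset.mem_univ, true_and]
      exact ⟨le_rfl, lt_irrefl _⟩
    have hpos : 0 < (Finset.univ.filter fun p : Fin n => t ≤ w p ∧ ¬ p.val < a.val).card :=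
      Finset.card_pos.mpr ⟨a, hMem⟩
    rw [hEmpty] at hsu
    simp only [Finset.card_empty] at hsu
    omega
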